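/- Suppose at least one suspicious type exists, and let u = ∑_{A_{−i} ∈ (X×Z)^{n−1}} min(1, B/(|G(A_{−i})| + 1)) · ∏_{j ≠ i} h(a_j) (a quantity independent of the agent i). Then the incentive to lie under the UNIFORM policy equals ε(UNIFORM) = max(0, 1 − (1 + c) · u). -/

import Mathlib

/-!
Threshold allocation model: `n` agents with types in `X × Z` (`X` verifiable,
`Z` self-reported), types drawn i.i.d. from a pmf `h`, score `f`, threshold `θ`,
audit budget `B`, penalty `c`.
-/

open Finset
open scoped Classical

noncomputable section

variable {X Z : Type*} [Fintype X] [Fintype Z] [Nonempty X] [Nonempty Z]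

/-- `h` is a probability mass function on `X × Z`. -/
def IsPmf (h : X × Z → ℝ) : Prop :=
  (∀ a, 0 ≤ h a) ∧ ∑ a : X × Z, h a = 1

/-- The `n`-agent profile obtained from the profile `am` of the agents other
than `i` by inserting `a` in slot `i` (denoted `A₋ᵢ ∪ᵢ {a}` in the paper). -/
def ins {n : ℕ} (i : Fin n) (am : {j : Fin n // j ≠ i} → X × Z) (a : X × Z) :
    Fin n → X × Z :=
  fun j => if hj : j = i then a else am ⟨j, hj⟩

/-- A report `a' = (x, z')` is suspicious: it has positive probability, scores at
or above the threshold, and some positive-probability type with the same `x`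
scores below the threshold. -/
def Suspicious (h f : X × Z → ℝ) (θ : ℝ) (a : X × Z) : Prop :=
  0 < h a ∧ θ ≤ f a ∧ ∃ z : Z, 0 < h (a.1, z) ∧ f (a.1, z) < θ

/-- `G A` is the set of indices of suspicious reports in the profile `A`. -/
def G {n : ℕ} (h f : X × Z → ℝ) (θ : ℝ) (A : Fin n → X × Z) : Finset (Fin n) :=
  univ.filter fun i => Suspicious h f θ (A i)

/-- An audit policy assigns to each profile a vector in `[0,1]^n` whose
suspicious coordinates sum to at most the budget `B`. -/
def IsAuditPolicy {n : ℕ} (h f : X × Z → ℝ) (θ B : ℝ)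
    (φ : (Fin n → X × Z) → Fin n → ℝ) : Prop :=
  ∀ A : Fin n → X × Z,
    (∀ i, φ A i ∈ Set.Icc (0 : ℝ) 1) ∧ ∑ i ∈ G h f θ A, φ A i ≤ B

/-- Expected gain of agent `i` with true type `a` reporting `a'` (when the others
report their true types, drawn i.i.d. from `h`), under audit policy `φ`. -/
def gain {n : ℕ} (h f : X × Z → ℝ) (θ c : ℝ)
    (φ : (Fin n → X × Z) → Fin n → ℝ) (i : Fin n) (a a' : X × Z) : ℝ :=
  if a' = a then 0
  else
    (∑ am : {j : Fin n // j ≠ i} → X × Z,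
        (∏ j, h (am j)) *
          ((if θ ≤ f a' then (1 : ℝ) else 0) * (1 - φ (ins i am a') i)
            - c * φ (ins i am a') i))
      - (if θ ≤ f a then (1 : ℝ) else 0)

/-- The incentive to lie under policy `φ`: the largest expected gain of any
misreport `a' = (x, z')` by any agent `i` with any true type `a = (x, z)` of
positive probability. -/
def eps {n : ℕ} (h f : X × Z → ℝ) (θ c : ℝ)
    (φ : (Fin n → X × Z) → Fin n → ℝ) : ℝ :=
  sSup {g : ℝ | ∃ (i : Fin n) (a : X × Z) (z' : Z),
    0 < h a ∧ g = gain h f θ c φ i a (a.1, z')}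

/-- The UNIFORM audit policy: audit each suspicious report with probability
`min 1 (B / |G(A)|)`, each sure-lie (`h (A i) = 0`) with probability `1`, and
everyone else with probability `0`. -/
def uniformPolicy {n : ℕ} (h f : X × Z → ℝ) (θ B : ℝ) :
    (Fin n → X × Z) → Fin n → ℝ :=
  fun A i =>
    if Suspicious h f θ (A i) then min 1 (B / ((G h f θ A).card : ℝ))
    else if h (A i) = 0 then 1 else 0

/-- Sum over all profiles of the product of probabilities is 1. -/
lemma sum_prod_pmf {n : ℕ} (i : Fin n) (h : X × Z → ℝ) (hpmf : IsPmf h) :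
    ∑ am : {j : Fin n // j ≠ i} → X × Z, ∏ j, h (am j) = 1 := by
  rw [← Fintype.prod_sum (fun (_ : {j : Fin n // j ≠ i}) (a : X × Z) => h a), hpmf.2]
  simp

/-- The count in slot `i` when inserting a suspicious `a'`. -/
lemma card_G_ins {n : ℕ} (h f : X × Z → ℝ) (θ : ℝ) (i : Fin n)
    (am : {j : Fin n // j ≠ i} → X × Z) (a' : X × Z)
    (ha' : Suspicious h f θ a') :
    ((G h f θ (ins i am a')).card : ℝ)
      = ((univ.filter fun j : {j : Fin n // j ≠ i} =>
          Suspicious h f θ (am j)).card : ℝ) + 1 := by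
  classical
  have hG : G h f θ (ins i am a')
      = insert i ((univ.filter fun j : {j : Fin n // j ≠ i} =>
          Suspicious h f θ (am j)).map (Function.Embedding.subtype _)) := by
    ext j
    by_cases hj : j = i
    · subst hj
      simp [G, ins, ha', Finset.mem_insert]
    · simp only [G, Finset.mem_filter, Finset.mem_univ, true_and,
        Finset.mem_insert, Finset.mem_map, Function.Embedding.coe_subtype, hj,
        or_false, ins]
      change j ∈ G h f θ (ins i am a') ↔ _
      rw [G, Finset.mem_filter]
      simp only [Finset.mem_univ, true_and, ins, dif_neg hj, false_or]
      constructor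
      · intro hs; exact ⟨⟨j, hj⟩, hs, rfl⟩
      · rintro ⟨⟨k, hk⟩, hks, rfl⟩; exact hks
  have hi : i ∉ ((univ.filter fun j : {j : Fin n // j ≠ i} =>
      Suspicious h f θ (am j)).map (Function.Embedding.subtype _)) := by
    simp only [Finset.mem_map, Function.Embedding.coe_subtype]
    rintro ⟨⟨k, hk⟩, -, hki⟩; exact hk hki
  rw [hG, Finset.card_insert_of_notMem hi, Finset.card_map]
  push_cast
  ring

/-- The quantity `u` doesn't depend on the agent `i`. -/
lemma u_indep {n : ℕ} (h f : X × Z → ℝ) (θ B : ℝ) (i i' : Fin n) :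
    (∑ am : {j : Fin n // j ≠ i'} → X × Z,
        min 1 (B / (((univ.filter fun j : {j : Fin n // j ≠ i'} =>
            Suspicious h f θ (am j)).card : ℝ) + 1)) * ∏ j, h (am j))
      = ∑ am : {j : Fin n // j ≠ i} → X × Z,
          min 1 (B / (((univ.filter fun j : {j : Fin n // j ≠ i} =>
              Suspicious h f θ (am j)).card : ℝ) + 1)) * ∏ j, h (am j) := by
  classical
  have hcard : Fintype.card {j : Fin n // j ≠ i'} = Fintype.card {j : Fin n // j ≠ i} := by
    simp [Fintype.card_subtype_compl]
  have e : {j : Fin n // j ≠ i'} ≃ {j : Fin n // j ≠ i} := Fintype.equivOfCardEq hcard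
  refine Fintype.sum_equiv (Equiv.arrowCongr e (Equiv.refl (X × Z))) _ _ ?_
  intro am
  have h1 : (univ.filter fun j : {j : Fin n // j ≠ i'} =>
      Suspicious h f θ (am j)).card
      = (univ.filter fun j : {j : Fin n // j ≠ i} =>
          Suspicious h f θ (am (e.symm j))).card := by
    rw [Finset.card_filter, Finset.card_filter]
    exact Fintype.sum_equiv e _ _ (fun j => by simp)
  have h2 : (∏ j, h (am j)) = ∏ j : {j : Fin n // j ≠ i}, h (am (e.symm j)) :=
    Fintype.prod_equiv e _ _ (fun j => by simp)
  simp only [Equiv.arrowCongr_apply, Equiv.refl_symm, Equiv.coe_refl,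
    Function.comp_apply, id_eq]
  rw [h1, h2]

/-- Gain of a suspicious misreport under the UNIFORM policy. -/
lemma gain_uniform_susp {n : ℕ} (h f : X × Z → ℝ) (θ B c : ℝ) (hpmf : IsPmf h)
    (i' : Fin n) (a a' : X × Z) (hne : a' ≠ a) (hs : Suspicious h f θ a') :
    gain h f θ c (uniformPolicy (n := n) h f θ B) i' a a'
      = (1 - (1 + c) *
          ∑ am : {j : Fin n // j ≠ i'} → X × Z,
            min 1 (B / (((univ.filter fun j : {j : Fin n // j ≠ i'} =>
                Suspicious h f θ (am j)).card : ℝ) + 1)) * ∏ j, h (am j))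
        - (if θ ≤ f a then (1 : ℝ) else 0) := by
  classical
  rw [gain, if_neg hne]
  congr 1
  have key : ∀ am : {j : Fin n // j ≠ i'} → X × Z,
      (∏ j, h (am j)) *
          ((if θ ≤ f a' then (1 : ℝ) else 0) *
              (1 - uniformPolicy h f θ B (ins i' am a') i')
            - c * uniformPolicy h f θ B (ins i' am a') i')
        = ∏ j, h (am j) - (1 + c) *
            (min 1 (B / (((univ.filter fun j : {j : Fin n // j ≠ i'} =>
                Suspicious h f θ (am j)).card : ℝ) + 1)) * ∏ j, h (am j)) := by
    intro am
    have hA : ins i' am a' i' = a' := by simp [ins]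
    have hφ : uniformPolicy h f θ B (ins i' am a') i'
        = min 1 (B / (((univ.filter fun j : {j : Fin n // j ≠ i'} =>
            Suspicious h f θ (am j)).card : ℝ) + 1)) := by
      simp only [uniformPolicy, hA, if_pos hs]
      rw [card_G_ins h f θ i' am a' hs]
    rw [hφ, if_pos hs.2.1]
    ring
  rw [Fintype.sum_congr _ _ key, Finset.sum_sub_distrib, ← Finset.mul_sum]
  rw [sum_prod_pmf i' h hpmf]

/-- if a suspicious type exists then, writing `u` for the expected
uniform audit probability of a suspicious report (a quantity independent of the
agent `i`), the incentive to lie under UNIFORM is `max 0 (1 - (1 + c) * u)`. -/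
theorem eps_uniform_eq {n : ℕ}
    (h f : X × Z → ℝ) (θ B c : ℝ)
    (hpmf : IsPmf h) (hB : 0 ≤ B) (hc : 0 ≤ c)
    (hex : ∃ a : X × Z, Suspicious h f θ a) (i : Fin n) :
    eps h f θ c (uniformPolicy (n := n) h f θ B) =
      max 0 (1 - (1 + c) *
        ∑ am : {j : Fin n // j ≠ i} → X × Z,
          min 1 (B / (((univ.filter fun j : {j : Fin n // j ≠ i} =>
              Suspicious h f θ (am j)).card : ℝ) + 1)) *
            ∏ j, h (am j)) := by
  classical
  set u : ℝ := ∑ am : {j : Fin n // j ≠ i} → X × Z,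
      min 1 (B / (((univ.filter fun j : {j : Fin n // j ≠ i} =>
          Suspicious h f θ (am j)).card : ℝ) + 1)) * ∏ j, h (am j) with hu
  have hu0 : 0 ≤ u := by
    apply Finset.sum_nonneg
    intro am _
    apply mul_nonneg
    · apply le_min zero_le_one
      apply div_nonneg hB
      positivity
    · exact Finset.prod_nonneg fun j _ => hpmf.1 _
  have h1c : (0 : ℝ) < 1 + c := by linarith
  set S : Set ℝ := {g : ℝ | ∃ (i' : Fin n) (a : X × Z) (z' : Z),
      0 < h a ∧ g = gain h f θ c (uniformPolicy (n := n) h f θ B) i' a (a.1, z')}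
      with hS
  obtain ⟨a0, hs0⟩ := hex
  obtain ⟨z', hz'pos, hz'lt⟩ := hs0.2.2
  -- 0 is attained (truthful report)
  have h0S : (0 : ℝ) ∈ S := by
    refine ⟨i, a0, a0.2, hs0.1, ?_⟩
    rw [show ((a0.1, a0.2) : X × Z) = a0 from rfl, gain, if_pos rfl]
  -- 1 - (1+c) * u is attained
  have h1S : (1 - (1 + c) * u) ∈ S := by
    refine ⟨i, (a0.1, z'), a0.2, hz'pos, ?_⟩
    have hne : ((a0.1, z') : X × Z) ≠ (a0.1, z') → False := fun h => h rfl
    have hne' : (((a0.1, z').1, a0.2) : X × Z) ≠ (a0.1, z') := by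
      intro hEq
      have h2 : f a0 < θ := by
        rw [show (a0 : X × Z) = ((a0.1, z').1, a0.2) from rfl, hEq]; exact hz'lt
      exact absurd hs0.2.1 (not_le.mpr h2)
    have hsa0 : Suspicious h f θ (((a0.1, z').1, a0.2)) := by
      rw [show ((((a0.1, z').1, a0.2) : X × Z)) = a0 from rfl]; exact hs0
    rw [gain_uniform_susp h f θ B c hpmf i (a0.1, z') ((a0.1, z').1, a0.2) hne' hsa0,
      if_neg (not_le.mpr (show f (a0.1, z') < θ from hz'lt)), u_indep h f θ B i i]
    ring
  -- upper bound
  have hub : ∀ g ∈ S, g ≤ max 0 (1 - (1 + c) * u) := by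
    rintro g ⟨i', a, z'', ha, rfl⟩
    set a' : X × Z := (a.1, z'') with ha'
    by_cases heq : a' = a
    · rw [gain, if_pos heq]; exact le_max_left _ _
    by_cases hsusp : Suspicious h f θ a'
    · rw [gain_uniform_susp h f θ B c hpmf i' a a' heq hsusp, u_indep h f θ B i i']
      by_cases hfa : θ ≤ f a
      · rw [if_pos hfa]
        have : (1 : ℝ) - (1 + c) * u - 1 = -((1 + c) * u) := by ring
        rw [this]
        exact le_trans (neg_nonpos.mpr (mul_nonneg h1c.le hu0)) (le_max_left _ _)
      · rw [if_neg hfa, sub_zero]; exact le_max_right _ _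
    · -- not suspicious
      rw [gain, if_neg heq]
      have hφ : ∀ am : {j : Fin n // j ≠ i'} → X × Z,
          uniformPolicy (n := n) h f θ B (ins i' am a') i'
            = if h a' = 0 then 1 else 0 := by
        intro am
        have hA : ins i' am a' i' = a' := by simp [ins]
        simp only [uniformPolicy, hA, if_neg hsusp]
      by_cases hz : h a' = 0
      · have key : ∀ am : {j : Fin n // j ≠ i'} → X × Z,
            (∏ j, h (am j)) *
              ((if θ ≤ f a' then (1 : ℝ) else 0) *
                  (1 - uniformPolicy h f θ B (ins i' am a') i')
                - c * uniformPolicy h f θ B (ins i' am a') i')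
              = (-c) * ∏ j, h (am j) := by
          intro am
          rw [hφ am, if_pos hz]
          rcases le_or_gt θ (f a') with hf' | hf'
          · rw [if_pos hf']; ring
          · rw [if_neg (not_le.mpr hf')]; ring
        rw [Fintype.sum_congr _ _ key, ← Finset.mul_sum, sum_prod_pmf i' h hpmf,
          mul_one]
        have : -c - (if θ ≤ f a then (1 : ℝ) else 0) ≤ 0 := by
          rcases le_or_gt θ (f a) with hfa | hfa
          · rw [if_pos hfa]; linarith
          · rw [if_neg (not_le.mpr hfa)]; linarith
        exact this.trans (le_max_left _ _)
      · -- h a' ≠ 0, not suspicious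
        have key : ∀ am : {j : Fin n // j ≠ i'} → X × Z,
            (∏ j, h (am j)) *
              ((if θ ≤ f a' then (1 : ℝ) else 0) *
                  (1 - uniformPolicy h f θ B (ins i' am a') i')
                - c * uniformPolicy h f θ B (ins i' am a') i')
              = (if θ ≤ f a' then (1 : ℝ) else 0) * ∏ j, h (am j) := by
          intro am
          rw [hφ am, if_neg hz]
          ring
        rw [Fintype.sum_congr _ _ key, ← Finset.mul_sum, sum_prod_pmf i' h hpmf,
          mul_one]
        rcases le_or_gt θ (f a') with hf' | hf'
        · -- a' scores above; since not suspicious and h a' > 0, f a ≥ θ too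
          have ha'pos : 0 < h a' := lt_of_le_of_ne (hpmf.1 a') (Ne.symm hz)
          have hfa : θ ≤ f a := by
            by_contra hfa
            exact hsusp ⟨ha'pos, hf', a.2, by
              rw [show ((a'.1, a.2) : X × Z) = a from rfl]
              exact ⟨ha, not_le.mp hfa⟩⟩
          rw [if_pos hf', if_pos hfa, sub_self]
          exact le_max_left _ _
        · rw [if_neg (not_le.mpr hf')]
          have : (0 : ℝ) - (if θ ≤ f a then (1 : ℝ) else 0) ≤ 0 := by
            rcases le_or_gt θ (f a) with hfa | hfa
            · rw [if_pos hfa]; norm_num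
            · rw [if_neg (not_le.mpr hfa)]; norm_num
          exact this.trans (le_max_left _ _)
  have hmem : max 0 (1 - (1 + c) * u) ∈ S := by
    rcases le_total (1 - (1 + c) * u) 0 with hle | hle
    · rw [max_eq_left hle]; exact h0S
    · rw [max_eq_right hle]; exact h1S
  exact IsGreatest.csSup_eq ⟨hmem, hub⟩

end
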